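/- arXiv:1604.08256 — 3 statements merged into one kernel-verified Lean document; each statement's English description precedes it below -/
import Mathlib

section
/- Let Γ : I → ℝ³ be a C¹ regular space curve observed by two cameras as in the context, with depths ρᵢ > 0, image curves γᵢ satisfying Γ − cᵢ = ρᵢγᵢ and ⟨e₃ᵢ, γᵢ⟩ = 1, image speeds gᵢ = ‖γᵢ′‖ > 0, and space unit tangent T = Γ′/‖Γ′‖. If T − ⟨e₃₂, T⟩γ₂ ≠ 0, then the ratio of image parametrization speeds at corresponding points is g₁/g₂ = (ρ₂/ρ₁) · ‖T − ⟨e₃₁, T⟩γ₁‖ / ‖T − ⟨e₃₂, T⟩γ₂‖. -/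
open scoped RealInnerProductSpace

noncomputable section

/-- ℝ³ with the Euclidean inner product. -/
abbrev V3 : Type := EuclideanSpace ℝ (Fin 3)

lemma speed_key (c e : V3) (Γ Γ' : ℝ → V3) (G : ℝ → ℝ) (T : ℝ → V3)
    (ρ : ℝ → ℝ) (γ γ' : ℝ → V3) (g : ℝ → ℝ)
    (hΓ' : ∀ s, HasDerivAt Γ (Γ' s) s)
    (hGpos : ∀ s, 0 < G s)
    (hT : ∀ s, T s = (G s)⁻¹ • Γ' s)
    (hρpos : ∀ s, 0 < ρ s)
    (hproj : ∀ s, Γ s - c = ρ s • γ s)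
    (hplane : ∀ s, ⟪e, γ s⟫ = 1)
    (hγ' : ∀ s, HasDerivAt γ (γ' s) s)
    (hg : ∀ s, g s = ‖γ' s‖) (s : ℝ) :
    ρ s * g s = G s * ‖T s - ⟪e, T s⟫ • γ s‖ := by
  have hρeq : ρ = fun t => ⟪e, Γ t - c⟫ := by
    funext t
    rw [hproj t, real_inner_smul_right, hplane t, mul_one]
  have hρder : HasDerivAt ρ ⟪e, Γ' s⟫ s := by
    rw [hρeq]
    have h1 : HasDerivAt (fun t => Γ t - c) (Γ' s) s := (hΓ' s).sub_const c
    simpa [Function.comp_def] using ((innerSL ℝ e).hasFDerivAt.comp_hasDerivAt s h1)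
  have hprod : HasDerivAt (fun t => ρ t • γ t) (ρ s • γ' s + ⟪e, Γ' s⟫ • γ s) s :=
    hρder.smul (hγ' s)
  have heq : (fun t => ρ t • γ t) = fun t => Γ t - c := by
    funext t; rw [← hproj t]
  rw [heq] at hprod
  have hΓder : HasDerivAt (fun t => Γ t - c) (Γ' s) s := (hΓ' s).sub_const c
  have huniq : ρ s • γ' s + ⟪e, Γ' s⟫ • γ s = Γ' s := hprod.unique hΓder
  have hkey : ρ s • γ' s = Γ' s - ⟪e, Γ' s⟫ • γ s := eq_sub_of_add_eq huniq
  have hΓT : Γ' s = G s • T s := by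
    rw [hT s, smul_smul, mul_inv_cancel₀ (hGpos s).ne', one_smul]
  have hfin : ρ s • γ' s = G s • (T s - ⟪e, T s⟫ • γ s) := by
    rw [hkey, hΓT, real_inner_smul_right, smul_sub, mul_smul]
  calc ρ s * g s = ‖ρ s • γ' s‖ := by
        rw [hg s, norm_smul, Real.norm_eq_abs, abs_of_pos (hρpos s)]
    _ = G s * ‖T s - ⟪e, T s⟫ • γ s‖ := by
        rw [hfin, norm_smul, Real.norm_eq_abs, abs_of_pos (hGpos s)]

/-- the ratio of image parametrization speeds in two views at
corresponding points is `g₁/g₂ = (ρ₂/ρ₁)·‖T − ⟨e₃₁,T⟩γ₁‖/‖T − ⟨e₃₂,T⟩γ₂‖`. -/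
theorem ratio_of_speeds_two_views
    (c₁ c₂ e₃₁ e₃₂ : V3)
    (Γ Γ' : ℝ → V3)
    (G : ℝ → ℝ) (T : ℝ → V3)
    (ρ₁ ρ₂ : ℝ → ℝ)
    (γ₁ γ₂ γ₁' γ₂' : ℝ → V3)
    (g₁ g₂ : ℝ → ℝ)
    -- cameras: unit optical axes
    (he₁ : ‖e₃₁‖ = 1) (he₂ : ‖e₃₂‖ = 1)
    -- Γ is C¹ and regular
    (hΓ' : ∀ s, HasDerivAt Γ (Γ' s) s)
    (hG : ∀ s, G s = ‖Γ' s‖)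
    (hGpos : ∀ s, 0 < G s)
    (hT : ∀ s, T s = (G s)⁻¹ • Γ' s)
    -- projection in each view, both image curves carrying the parameter of Γ
    (hρ₁pos : ∀ s, 0 < ρ₁ s) (hρ₂pos : ∀ s, 0 < ρ₂ s)
    (hproj₁ : ∀ s, Γ s - c₁ = ρ₁ s • γ₁ s)
    (hproj₂ : ∀ s, Γ s - c₂ = ρ₂ s • γ₂ s)
    (hplane₁ : ∀ s, ⟪e₃₁, γ₁ s⟫ = 1)
    (hplane₂ : ∀ s, ⟪e₃₂, γ₂ s⟫ = 1)
    -- image apparatus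
    (hγ₁' : ∀ s, HasDerivAt γ₁ (γ₁' s) s)
    (hγ₂' : ∀ s, HasDerivAt γ₂ (γ₂' s) s)
    (hg₁ : ∀ s, g₁ s = ‖γ₁' s‖) (hg₂ : ∀ s, g₂ s = ‖γ₂' s‖)
    (hg₁pos : ∀ s, 0 < g₁ s) (hg₂pos : ∀ s, 0 < g₂ s) :
    ∀ s, T s - ⟪e₃₂, T s⟫ • γ₂ s ≠ 0 →
      g₁ s / g₂ s
        = (ρ₂ s / ρ₁ s)
          * (‖T s - ⟪e₃₁, T s⟫ • γ₁ s‖ / ‖T s - ⟪e₃₂, T s⟫ • γ₂ s‖) := by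
  intro s hA₂
  have h1 := speed_key c₁ e₃₁ Γ Γ' G T ρ₁ γ₁ γ₁' g₁ hΓ' hGpos hT hρ₁pos hproj₁
    hplane₁ hγ₁' hg₁ s
  have h2 := speed_key c₂ e₃₂ Γ Γ' G T ρ₂ γ₂ γ₂' g₂ hΓ' hGpos hT hρ₂pos hproj₂
    hplane₂ hγ₂' hg₂ s
  have hA₂' : ‖T s - ⟪e₃₂, T s⟫ • γ₂ s‖ ≠ 0 := norm_ne_zero_iff.mpr hA₂
  have hg₂' := (hg₂pos s).ne'
  have hρ₁' := (hρ₁pos s).ne'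
  set a₁ := ‖T s - ⟪e₃₁, T s⟫ • γ₁ s‖ with ha₁
  set a₂ := ‖T s - ⟪e₃₂, T s⟫ • γ₂ s‖ with ha₂
  have hρ₂' := (hρ₂pos s).ne'
  rw [div_mul_div_comm, div_eq_div_iff hg₂' (mul_ne_zero hρ₁' hA₂')]
  linear_combination a₂ * h1 - a₁ * h2
end
end

section
/- Let Γ : I → ℝ³ be a C¹ regular space curve observed by two cameras as in the context, with depths ρᵢ > 0, image curves γᵢ satisfying Γ − cᵢ = ρᵢγᵢ, image speeds gᵢ > 0 and unit tangents 𝐭ᵢ, space speed G and unit tangent T. Then for each view i ∈ {1,2}: T = (ρᵢ′/G)γᵢ + (ρᵢgᵢ/G)𝐭ᵢ; consequently, if ⟨γ₁, γ₂ × 𝐭₂⟩ ≠ 0 then ρ₁′/(ρ₁g₁) = −⟨𝐭₁, γ₂ × 𝐭₂⟩/⟨γ₁, γ₂ × 𝐭₂⟩, and if ⟨γ₂, γ₁ × 𝐭₁⟩ ≠ 0 then ρ₂′/(ρ₂g₂) = −⟨𝐭₂, γ₁ × 𝐭₁⟩/⟨γ₂, γ₁ × 𝐭₁⟩. In particular the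 space tangent T is reconstructed from the corresponding image points and tangents (γ₁, 𝐭₁) and (γ₂, 𝐭₂) without knowledge of the depths. -/
open scoped RealInnerProductSpace

noncomputable section

/-- The cross product on ℝ³. -/
def cross3 (u v : V3) : V3 :=
  WithLp.toLp 2 ![u 1 * v 2 - u 2 * v 1, u 2 * v 0 - u 0 * v 2, u 0 * v 1 - u 1 * v 0]

lemma inner_left_cross (u v : V3) : ⟪u, cross3 u v⟫ = 0 := by
  simp only [cross3, PiLp.inner_apply, Fin.sum_univ_three, RCLike.inner_apply, conj_trivial]
  simp [Matrix.cons_val_zero, Matrix.cons_val_one]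
  ring

lemma inner_right_cross (u v : V3) : ⟪v, cross3 u v⟫ = 0 := by
  simp only [cross3, PiLp.inner_apply, Fin.sum_univ_three, RCLike.inner_apply, conj_trivial]
  simp [Matrix.cons_val_zero, Matrix.cons_val_one]
  ring

/-- tangent reconstruction from two views.  In each view
`T = (ρᵢ′/G)γᵢ + (ρᵢgᵢ/G)𝐭ᵢ`, and consequently the quantities `ρᵢ′/(ρᵢgᵢ)` are
determined by the image points and tangents alone. -/
theorem tangent_reconstruction_two_views
    (c₁ c₂ e₃₁ e₃₂ : V3)
    (Γ Γ' : ℝ → V3)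
    (G : ℝ → ℝ) (T : ℝ → V3)
    (ρ₁ ρ₂ ρ₁' ρ₂' : ℝ → ℝ)
    (γ₁ γ₂ γ₁' γ₂' : ℝ → V3)
    (g₁ g₂ : ℝ → ℝ)
    (t₁ t₂ : ℝ → V3)
    -- cameras: unit optical axes
    (he₁ : ‖e₃₁‖ = 1) (he₂ : ‖e₃₂‖ = 1)
    -- Γ is C¹ and regular
    (hΓ' : ∀ s, HasDerivAt Γ (Γ' s) s)
    (hG : ∀ s, G s = ‖Γ' s‖)
    (hGpos : ∀ s, 0 < G s)
    (hT : ∀ s, T s = (G s)⁻¹ • Γ' s)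
    -- projection in each view, both image curves carrying the parameter of Γ
    (hρ₁pos : ∀ s, 0 < ρ₁ s) (hρ₂pos : ∀ s, 0 < ρ₂ s)
    (hρ₁' : ∀ s, HasDerivAt ρ₁ (ρ₁' s) s)
    (hρ₂' : ∀ s, HasDerivAt ρ₂ (ρ₂' s) s)
    (hproj₁ : ∀ s, Γ s - c₁ = ρ₁ s • γ₁ s)
    (hproj₂ : ∀ s, Γ s - c₂ = ρ₂ s • γ₂ s)
    (hplane₁ : ∀ s, ⟪e₃₁, γ₁ s⟫ = 1)
    (hplane₂ : ∀ s, ⟪e₃₂, γ₂ s⟫ = 1)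
    -- image apparatus
    (hγ₁' : ∀ s, HasDerivAt γ₁ (γ₁' s) s)
    (hγ₂' : ∀ s, HasDerivAt γ₂ (γ₂' s) s)
    (hg₁ : ∀ s, g₁ s = ‖γ₁' s‖) (hg₂ : ∀ s, g₂ s = ‖γ₂' s‖)
    (hg₁pos : ∀ s, 0 < g₁ s) (hg₂pos : ∀ s, 0 < g₂ s)
    (ht₁ : ∀ s, t₁ s = (g₁ s)⁻¹ • γ₁' s)
    (ht₂ : ∀ s, t₂ s = (g₂ s)⁻¹ • γ₂' s) :
    ∀ s,
      T s = (ρ₁' s / G s) • γ₁ s + (ρ₁ s * g₁ s / G s) • t₁ s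
      ∧ T s = (ρ₂' s / G s) • γ₂ s + (ρ₂ s * g₂ s / G s) • t₂ s
      ∧ (⟪γ₁ s, cross3 (γ₂ s) (t₂ s)⟫ ≠ 0 →
          ρ₁' s / (ρ₁ s * g₁ s)
            = -(⟪t₁ s, cross3 (γ₂ s) (t₂ s)⟫ / ⟪γ₁ s, cross3 (γ₂ s) (t₂ s)⟫))
      ∧ (⟪γ₂ s, cross3 (γ₁ s) (t₁ s)⟫ ≠ 0 →
          ρ₂' s / (ρ₂ s * g₂ s)
            = -(⟪t₂ s, cross3 (γ₁ s) (t₁ s)⟫ / ⟪γ₂ s, cross3 (γ₁ s) (t₁ s)⟫)) := by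
  
  intro s
  have hg₁0 : g₁ s ≠ 0 := (hg₁pos s).ne'
  have hg₂0 : g₂ s ≠ 0 := (hg₂pos s).ne'
  have hρ₁0 : ρ₁ s ≠ 0 := (hρ₁pos s).ne'
  have hρ₂0 : ρ₂ s ≠ 0 := (hρ₂pos s).ne'
  have hG0 : G s ≠ 0 := (hGpos s).ne'
  -- derivative of Γ - c via projections
  have hd₁ : Γ' s = ρ₁' s • γ₁ s + ρ₁ s • γ₁' s := by
    have h1 : HasDerivAt (fun t => Γ t - c₁) (Γ' s) s := (hΓ' s).sub_const c₁
    have h2 : HasDerivAt (fun t => ρ₁ t • γ₁ t) (ρ₁' s • γ₁ s + ρ₁ s • γ₁' s) s := by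
      rw [add_comm]; exact (hρ₁' s).smul (hγ₁' s)
    have := h2.congr_of_eventuallyEq (Filter.Eventually.of_forall fun t => hproj₁ t)
    exact h1.unique this
  have hd₂ : Γ' s = ρ₂' s • γ₂ s + ρ₂ s • γ₂' s := by
    have h1 : HasDerivAt (fun t => Γ t - c₂) (Γ' s) s := (hΓ' s).sub_const c₂
    have h2 : HasDerivAt (fun t => ρ₂ t • γ₂ t) (ρ₂' s • γ₂ s + ρ₂ s • γ₂' s) s := by
      rw [add_comm]; exact (hρ₂' s).smul (hγ₂' s)
    have := h2.congr_of_eventuallyEq (Filter.Eventually.of_forall fun t => hproj₂ t)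
    exact h1.unique this
  have hT₁ : T s = (ρ₁' s / G s) • γ₁ s + (ρ₁ s * g₁ s / G s) • t₁ s := by
    rw [hT s, hd₁, ht₁ s, smul_add, smul_smul, smul_smul, smul_smul]
    congr 1
    · rw [div_eq_inv_mul]
    · congr 1
      field_simp
  have hT₂ : T s = (ρ₂' s / G s) • γ₂ s + (ρ₂ s * g₂ s / G s) • t₂ s := by
    rw [hT s, hd₂, ht₂ s, smul_add, smul_smul, smul_smul, smul_smul]
    congr 1
    · rw [div_eq_inv_mul]
    · congr 1
      field_simp
  refine ⟨hT₁, hT₂, ?_, ?_⟩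
  · intro hne
    have hTw : ⟪T s, cross3 (γ₂ s) (t₂ s)⟫ = 0 := by
      rw [hT₂]
      rw [inner_add_left, real_inner_smul_left, real_inner_smul_left,
        inner_left_cross, inner_right_cross]
      ring
    rw [hT₁, inner_add_left, real_inner_smul_left, real_inner_smul_left] at hTw
    set A := ⟪γ₁ s, cross3 (γ₂ s) (t₂ s)⟫
    set B := ⟪t₁ s, cross3 (γ₂ s) (t₂ s)⟫
    have key : ρ₁' s * A + (ρ₁ s * g₁ s) * B = 0 := by
      have := hTw
      field_simp at this
      linarith [this]
    field_simp
    linarith [key]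
  · intro hne
    have hTw : ⟪T s, cross3 (γ₁ s) (t₁ s)⟫ = 0 := by
      rw [hT₁]
      rw [inner_add_left, real_inner_smul_left, real_inner_smul_left,
        inner_left_cross, inner_right_cross]
      ring
    rw [hT₂, inner_add_left, real_inner_smul_left, real_inner_smul_left] at hTw
    set A := ⟪γ₂ s, cross3 (γ₁ s) (t₁ s)⟫
    set B := ⟪t₂ s, cross3 (γ₁ s) (t₁ s)⟫
    have key : ρ₂' s * A + (ρ₂ s * g₂ s) * B = 0 := by
      have := hTw
      field_simp at this
      linarith [this]
    field_simp
    linarith [key]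
end
end

section
/- Let c(t) ∈ ℝ³ be a C¹ camera-center trajectory and Γʷ(t) ∈ ℝ³ a C¹ point trajectory on the contour generator of a surface, with C¹ unit surface normal Nʷ(t) satisfying the occlusion condition ⟨Γʷ(t) − c(t), Nʷ(t)⟩ = 0 for all t, and satisfying the epipolar parametrization Γʷ_t(t) = λ(t)(Γʷ(t) − c(t)) for some scalar function λ. Assume Γʷ(t) ≠ c(t) and Γʷ_t(t) ≠ 0, and define the normal curvature of the surface along the visual direction by Kᵗ = −⟨Γʷ_t, Nʷ_t⟩/⟨Γʷ_t, Γʷ_t⟩. If Kᵗ ≠ 0, then the 3D velocity of the occluding-contour point is Γʷ_t = −(⟨c_t, Nʷ⟩/Kᵗ) · (Γʷ − c)/‖Γʷ − c‖². -/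
open scoped RealInnerProductSpace

noncomputable section

/-- 3D velocity of an occluding-contour point under the epipolar
parametrization: if the normal curvature `Kᵗ = −⟨Γʷ_t, Nʷ_t⟩/⟨Γʷ_t, Γʷ_t⟩` of
the surface along the visual direction is nonzero, then
`Γʷ_t = −(⟨c_t, Nʷ⟩/Kᵗ)·(Γʷ − c)/‖Γʷ − c‖²`. -/
theorem occluding_contour_3d_velocity
    (c ct : ℝ → V3)
    (Γw Γwt : ℝ → V3)
    (Nw Nwt : ℝ → V3)
    (lam : ℝ → ℝ)
    -- C¹ camera-center trajectory and contour-generator point trajectory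
    (hct : ∀ t, HasDerivAt c (ct t) t)
    (hΓwt : ∀ t, HasDerivAt Γw (Γwt t) t)
    -- C¹ unit surface normal
    (hNwt : ∀ t, HasDerivAt Nw (Nwt t) t)
    (hNunit : ∀ t, ‖Nw t‖ = 1)
    -- occlusion condition: the viewing ray lies in the tangent plane
    (hocc : ∀ t, ⟪Γw t - c t, Nw t⟫ = 0)
    -- epipolar parametrization: the velocity is parallel to the viewing ray
    (hepip : ∀ t, Γwt t = lam t • (Γw t - c t))
    -- nondegeneracy
    (hne : ∀ t, Γw t ≠ c t)
    (hvne : ∀ t, Γwt t ≠ 0) :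
    ∀ t,
      (let Kt : ℝ := -(⟪Γwt t, Nwt t⟫ / ⟪Γwt t, Γwt t⟫)
       Kt ≠ 0 →
         Γwt t = (-(⟪ct t, Nw t⟫ / Kt)) • ((‖Γw t - c t‖ ^ 2)⁻¹ • (Γw t - c t))) := by
  intro t Kt hK
  have hKdef : Kt = -(⟪Γwt t, Nwt t⟫ / ⟪Γwt t, Γwt t⟫) := rfl
  have hdne : Γw t - c t ≠ 0 := sub_ne_zero.mpr (hne t)
  have hlam : lam t ≠ 0 := by
    intro h
    exact hvne t (by rw [hepip t, h, zero_smul])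
  have hderiv : HasDerivAt (fun s => ⟪Γw s - c s, Nw s⟫)
      (⟪Γw t - c t, Nwt t⟫ + ⟪Γwt t - ct t, Nw t⟫) t :=
    HasDerivAt.inner ℝ ((hΓwt t).sub (hct t)) (hNwt t)
  have h0 : HasDerivAt (fun s => ⟪Γw s - c s, Nw s⟫) 0 t := by
    have heq : (fun s => ⟪Γw s - c s, Nw s⟫) = fun _ => (0 : ℝ) := funext hocc
    rw [heq]; exact hasDerivAt_const t 0
  have hzero : ⟪Γw t - c t, Nwt t⟫ + ⟪Γwt t - ct t, Nw t⟫ = 0 := hderiv.unique h0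
  -- ⟪Γwt t, Nw t⟫ = 0
  have hperp : ⟪Γwt t, Nw t⟫ = 0 := by
    rw [hepip t, real_inner_smul_left, hocc t, mul_zero]
  have hA : ⟪Γw t - c t, Nwt t⟫ = ⟪ct t, Nw t⟫ := by
    have h1 : ⟪Γwt t - ct t, Nw t⟫ = -⟪ct t, Nw t⟫ := by
      rw [inner_sub_left, hperp]; ring
    rw [h1] at hzero
    linarith
  set d : V3 := Γw t - c t with hd
  set A : ℝ := ⟪ct t, Nw t⟫ with hAdef
  have hdd : ⟪d, d⟫ = ‖d‖ ^ 2 := real_inner_self_eq_norm_sq d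
  have hdnorm : ‖d‖ ^ 2 ≠ 0 := pow_ne_zero 2 (norm_ne_zero_iff.mpr hdne)
  have hKt : Kt = -(A / (lam t * ‖d‖ ^ 2)) := by
    rw [hKdef, hepip t, real_inner_smul_left, real_inner_smul_left,
      real_inner_smul_right, hA, hdd]
    field_simp
  have hAne : A ≠ 0 := by
    intro h
    apply hK
    rw [hKt, h, zero_div, neg_zero]
  rw [hepip t, hKt]
  rw [smul_smul]
  congr 1
  field_simp
end
end
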